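/- Let p be a rational number, let x be a function from 3-element subsets of Fin 5 to ℚ, and let y be a function from 2-element subsets of Fin 5 to ℚ. Assume that for every 3-element subset {i,j,k} of Fin 5: y{i,j} + y{i,k} + y{j,k} = 2·x{i,j,k} + 2p. Then for any bijection ε : ZMod 5 → Fin 5, ∑_{i ∈ ZMod 5} y{ε(i), ε(i+1)} = 10p/3 + (4/3)·∑_{i ∈ ZMod 5} x{ε(i), ε(i+1), ε(i+2)} − (2/3)·∑_{i ∈ ZMod 5} x{ε(i), ε(i+2), ε(i+4)}. -/

import Mathlib

/-- Solution of the linear system relating pair and triple component counts. -/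
theorem stmt_4 (p : ℚ) (x y : Finset (Fin 5) → ℚ)
    (hxy : ∀ i j k : Fin 5, i ≠ j → i ≠ k → j ≠ k →
      y {i, j} + y {i, k} + y {j, k} = 2 * x {i, j, k} + 2 * p)
    (ε : ZMod 5 ≃ Fin 5) :
    ∑ i : ZMod 5, y {ε i, ε (i + 1)} =
      10 * p / 3 + (4 / 3) * ∑ i : ZMod 5, x {ε i, ε (i + 1), ε (i + 2)}
        - (2 / 3) * ∑ i : ZMod 5, x {ε i, ε (i + 2), ε (i + 4)} := by
  have hs : ∀ f : ZMod 5 → ℚ, ∑ i : ZMod 5, f i = f 0 + f 1 + f 2 + f 3 + f 4 := fun f => by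
    show ∑ i : Fin 5, f i = _
    exact Fin.sum_univ_five f
  rw [hs, hs, hs]
  have ne : ∀ i j : ZMod 5, i ≠ j → ε i ≠ ε j := fun i j h he => h (ε.injective he)
  have h012 := hxy (ε 0) (ε 1) (ε 2) (ne _ _ (by decide)) (ne _ _ (by decide)) (ne _ _ (by decide))
  have h013 := hxy (ε 0) (ε 1) (ε 3) (ne _ _ (by decide)) (ne _ _ (by decide)) (ne _ _ (by decide))
  have h014 := hxy (ε 0) (ε 1) (ε 4) (ne _ _ (by decide)) (ne _ _ (by decide)) (ne _ _ (by decide))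
  have h023 := hxy (ε 0) (ε 2) (ε 3) (ne _ _ (by decide)) (ne _ _ (by decide)) (ne _ _ (by decide))
  have h024 := hxy (ε 0) (ε 2) (ε 4) (ne _ _ (by decide)) (ne _ _ (by decide)) (ne _ _ (by decide))
  have h034 := hxy (ε 0) (ε 3) (ε 4) (ne _ _ (by decide)) (ne _ _ (by decide)) (ne _ _ (by decide))
  have h123 := hxy (ε 1) (ε 2) (ε 3) (ne _ _ (by decide)) (ne _ _ (by decide)) (ne _ _ (by decide))
  have h124 := hxy (ε 1) (ε 2) (ε 4) (ne _ _ (by decide)) (ne _ _ (by decide)) (ne _ _ (by decide))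
  have h134 := hxy (ε 1) (ε 3) (ε 4) (ne _ _ (by decide)) (ne _ _ (by decide)) (ne _ _ (by decide))
  have h234 := hxy (ε 2) (ε 3) (ε 4) (ne _ _ (by decide)) (ne _ _ (by decide)) (ne _ _ (by decide))
  simp only [show (0+1:ZMod 5)=1 from rfl, show (1+1:ZMod 5)=2 from rfl,
    show (2+1:ZMod 5)=3 from rfl, show (3+1:ZMod 5)=4 from rfl, show (4+1:ZMod 5)=0 from rfl,
    show (0+2:ZMod 5)=2 from rfl, show (1+2:ZMod 5)=3 from rfl, show (2+2:ZMod 5)=4 from rfl,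
    show (3+2:ZMod 5)=0 from rfl, show (4+2:ZMod 5)=1 from rfl,
    show (0+4:ZMod 5)=4 from rfl, show (1+4:ZMod 5)=0 from rfl, show (2+4:ZMod 5)=1 from rfl,
    show (3+4:ZMod 5)=2 from rfl, show (4+4:ZMod 5)=3 from rfl]
  have e1 : ({ε 3, ε 4, ε 0} : Finset (Fin 5)) = {ε 0, ε 4, ε 3} := by ext a; simp; tauto
  have e2 : ({ε 1, ε 4, ε 0} : Finset (Fin 5)) = {ε 0, ε 4, ε 1} := by ext a; simp; tauto
  have e3 : ({ε 2, ε 3, ε 0} : Finset (Fin 5)) = {ε 0, ε 3, ε 2} := by ext a; simp; tauto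
  have e4 : ({ε 3, ε 4, ε 1} : Finset (Fin 5)) = {ε 1, ε 4, ε 3} := by ext a; simp; tauto
  have e5 : ({ε 1, ε 3, ε 0} : Finset (Fin 5)) = {ε 0, ε 3, ε 1} := by ext a; simp; tauto
  have e6 : ({ε 2, ε 4, ε 1} : Finset (Fin 5)) = {ε 1, ε 4, ε 2} := by ext a; simp; tauto
  simp only [Finset.insert_comm, Finset.pair_comm] at *
  rw [e1, e2, e3, e4, e5, e6]
  linarith
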